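/- arXiv:1504.05758 — 3 statements merged into one kernel-verified Lean document; each statement's English description precedes it below -/
import Mathlib

section
/- For every N ≥ 1, the double integral ∫₀^N ∫₀^N sin²(π(x+y))/(π²(x+y)²) dx dy equals (1/(2π²))·log N·(1+o(1)) as N → ∞; more precisely, the difference between this integral and (1/(2π²))·log N is bounded by a constant independent of N. -/
open MeasureTheory Real intervalIntegral

noncomputable def gg (u : ℝ) : ℝ := Real.sin (π * u) ^ 2 / (π ^ 2 * u ^ 2)

lemma gg_nonneg (u : ℝ) : 0 ≤ gg u := div_nonneg (sq_nonneg _) (by positivity)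

lemma gg_le_one (u : ℝ) : gg u ≤ 1 := by
  rcases eq_or_ne u 0 with h | h
  · simp [gg, h]
  · rw [gg, div_le_one (by positivity)]
    calc Real.sin (π * u) ^ 2 ≤ (π * u) ^ 2 := Real.sin_sq_le_sq
      _ = π ^ 2 * u ^ 2 := by ring

lemma gg_meas : Measurable gg := by
  unfold gg
  exact ((Real.continuous_sin.comp (continuous_const.mul continuous_id)).pow 2).measurable.div
    (measurable_const.mul (measurable_id.pow_const 2))

lemma gg_int (a b : ℝ) : IntervalIntegrable gg volume a b := by
  rw [intervalIntegrable_iff]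
  apply Measure.integrableOn_of_bounded (M := 1) (by
    exact ((measure_mono Set.Ioc_subset_Icc_self).trans_lt measure_Icc_lt_top).ne) gg_meas.aestronglyMeasurable
  filter_upwards with x
  rw [Real.norm_eq_abs, abs_of_nonneg (gg_nonneg x)]
  exact gg_le_one x

lemma H_cont (N : ℝ) : Continuous (fun x => ∫ u in x..(x + N), gg u) := by
  have h : (fun x => ∫ u in x..(x + N), gg u)
      = fun x => (∫ u in (0:ℝ)..(x + N), gg u) - ∫ u in (0:ℝ)..x, gg u := by
    funext x
    rw [← intervalIntegral.integral_interval_sub_left (gg_int 0 (x + N)) (gg_int 0 x)]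
  rw [h]
  exact ((intervalIntegral.continuous_primitive (fun a b => gg_int a b) 0).comp
    (continuous_id.add continuous_const)).sub
    (intervalIntegral.continuous_primitive (fun a b => gg_int a b) 0)

lemma H_int (N a b : ℝ) : IntervalIntegrable (fun x => ∫ u in x..(x + N), gg u) volume a b :=
  (H_cont N).intervalIntegrable a b

lemma integral_inv_sq' {a b : ℝ} (ha : 0 < a) (hab : a ≤ b) :
    ∫ u in a..b, (u ^ 2)⁻¹ = a⁻¹ - b⁻¹ := by
  have hderiv : ∀ u ∈ Set.uIcc a b, HasDerivAt (fun t => -t⁻¹) ((u ^ 2)⁻¹) u := by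
    intro u hu
    rw [Set.uIcc_of_le hab] at hu
    have hu0 : u ≠ 0 := (lt_of_lt_of_le ha hu.1).ne'
    simpa [pow_two] using (show HasDerivAt (fun t : ℝ => -t⁻¹) (-(-(u ^ 2)⁻¹)) u from (hasDerivAt_inv hu0).neg)
  have hint : IntervalIntegrable (fun u : ℝ => (u ^ 2)⁻¹) volume a b := by
    apply ContinuousOn.intervalIntegrable
    intro u hu
    rw [Set.uIcc_of_le hab] at hu
    have hu0 : u ≠ 0 := (lt_of_lt_of_le ha hu.1).ne'
    exact ((continuousAt_id.pow 2).inv₀ (pow_ne_zero _ hu0)).continuousWithinAt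
  rw [intervalIntegral.integral_eq_sub_of_hasDerivAt hderiv hint]
  ring

lemma integral_inv_cube {a b : ℝ} (ha : 0 < a) (hab : a ≤ b) :
    ∫ u in a..b, (u ^ 3)⁻¹ = ((a ^ 2)⁻¹ - (b ^ 2)⁻¹) / 2 := by
  have hderiv : ∀ u ∈ Set.uIcc a b, HasDerivAt (fun t => -(t ^ 2)⁻¹ / 2) ((u ^ 3)⁻¹) u := by
    intro u hu
    rw [Set.uIcc_of_le hab] at hu
    have hu0 : u ≠ 0 := (lt_of_lt_of_le ha hu.1).ne'
    have h1 : HasDerivAt (fun t : ℝ => (t ^ 2)⁻¹) (-(2 * u ^ 1) / (u ^ 2) ^ 2) u :=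
      (hasDerivAt_pow 2 u).inv (by positivity)
    have h2 : HasDerivAt (fun t : ℝ => -(t ^ 2)⁻¹ / 2) (-(-(2 * u ^ 1) / (u ^ 2) ^ 2) / 2) u :=
      (h1.neg.div_const 2)
    convert h2 using 1
    field_simp
  have hint : IntervalIntegrable (fun u : ℝ => (u ^ 3)⁻¹) volume a b := by
    apply ContinuousOn.intervalIntegrable
    intro u hu
    rw [Set.uIcc_of_le hab] at hu
    have hu0 : u ≠ 0 := (lt_of_lt_of_le ha hu.1).ne'
    exact ((continuousAt_id.pow 3).inv₀ (pow_ne_zero _ hu0)).continuousWithinAt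
  rw [intervalIntegral.integral_eq_sub_of_hasDerivAt hderiv hint]
  ring

lemma osc_deriv {u : ℝ} (hu : u ≠ 0) :
    HasDerivAt (fun t => Real.sin (2 * π * t) * (2 * π * t ^ 2)⁻¹)
      (Real.cos (2 * π * u) / u ^ 2 - Real.sin (2 * π * u) / (π * u ^ 3)) u := by
  have h1 : HasDerivAt (fun t : ℝ => 2 * π * t) (2 * π) u := by
    simpa using (hasDerivAt_id u).const_mul (2 * π)
  have h2 : HasDerivAt (fun t : ℝ => Real.sin (2 * π * t)) (Real.cos (2 * π * u) * (2 * π)) u :=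
    (Real.hasDerivAt_sin (2 * π * u)).comp u h1
  have h3 : HasDerivAt (fun t : ℝ => 2 * π * t ^ 2) (2 * π * (2 * u ^ 1)) u :=
    (hasDerivAt_pow 2 u).const_mul (2 * π)
  have h4 : HasDerivAt (fun t : ℝ => (2 * π * t ^ 2)⁻¹)
      (-(2 * π * (2 * u ^ 1)) / (2 * π * u ^ 2) ^ 2) u :=
    h3.inv (by positivity)
  have h5 : HasDerivAt (fun t => Real.sin (2 * π * t) * (2 * π * t ^ 2)⁻¹) (Real.cos (2 * π * u) * (2 * π) * (2 * π * u ^ 2)⁻¹ + Real.sin (2 * π * u) * (-(2 * π * (2 * u ^ 1)) / (2 * π * u ^ 2) ^ 2)) u :=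
    h2.mul h4
  convert h5 using 1
  have hπ := Real.pi_ne_zero
  field_simp
  ring

lemma cont_on_ne_zero {a b : ℝ} (ha : 0 < a) (hab : a ≤ b) (f : ℝ → ℝ)
    (hf : ∀ u : ℝ, u ≠ 0 → ContinuousAt f u) :
    IntervalIntegrable f volume a b := by
  apply ContinuousOn.intervalIntegrable
  intro u hu
  rw [Set.uIcc_of_le hab] at hu
  exact (hf u (lt_of_lt_of_le ha hu.1).ne').continuousWithinAt

lemma osc_bound {a b : ℝ} (ha : 1 ≤ a) (hab : a ≤ b) :
    |∫ u in a..b, Real.cos (2 * π * u) / u ^ 2| ≤ (a ^ 2)⁻¹ := by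
  have ha0 : 0 < a := lt_of_lt_of_le one_pos ha
  have hb0 : 0 < b := lt_of_lt_of_le ha0 hab
  have hcos_int : IntervalIntegrable (fun u => Real.cos (2 * π * u) / u ^ 2) volume a b := by
    apply cont_on_ne_zero ha0 hab
    intro u hu
    exact (Real.continuous_cos.continuousAt.comp (by fun_prop)).div (by fun_prop) (by positivity)
  have hsin_int : IntervalIntegrable (fun u => Real.sin (2 * π * u) / (π * u ^ 3)) volume a b := by
    apply cont_on_ne_zero ha0 hab
    intro u hu
    exact (Real.continuous_sin.continuousAt.comp (by fun_prop)).div (by fun_prop)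
      (by positivity)
  have hderiv : ∀ u ∈ Set.uIcc a b,
      HasDerivAt (fun t => Real.sin (2 * π * t) * (2 * π * t ^ 2)⁻¹)
        (Real.cos (2 * π * u) / u ^ 2 - Real.sin (2 * π * u) / (π * u ^ 3)) u := by
    intro u hu
    rw [Set.uIcc_of_le hab] at hu
    exact osc_deriv (lt_of_lt_of_le ha0 hu.1).ne'
  have key := intervalIntegral.integral_eq_sub_of_hasDerivAt hderiv (hcos_int.sub hsin_int)
  rw [intervalIntegral.integral_sub hcos_int hsin_int, sub_eq_iff_eq_add] at key
  rw [key]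
  have hFb : |Real.sin (2 * π * b) * (2 * π * b ^ 2)⁻¹| ≤ (2 * π * a ^ 2)⁻¹ := by
    rw [abs_mul]
    have h1 : |Real.sin (2 * π * b)| ≤ 1 := Real.abs_sin_le_one _
    have h2 : |(2 * π * b ^ 2)⁻¹| ≤ (2 * π * a ^ 2)⁻¹ := by
      rw [abs_of_nonneg (by positivity)]
      apply inv_anti₀ (by positivity)
      have : a ^ 2 ≤ b ^ 2 := by nlinarith
      nlinarith [Real.pi_pos]
    calc |Real.sin (2 * π * b)| * |(2 * π * b ^ 2)⁻¹| ≤ 1 * (2 * π * a ^ 2)⁻¹ := by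
          apply mul_le_mul h1 h2 (abs_nonneg _) zero_le_one
      _ = (2 * π * a ^ 2)⁻¹ := one_mul _
  have hFa : |Real.sin (2 * π * a) * (2 * π * a ^ 2)⁻¹| ≤ (2 * π * a ^ 2)⁻¹ := by
    rw [abs_mul, abs_of_nonneg (show (0:ℝ) ≤ (2 * π * a ^ 2)⁻¹ by positivity)]
    calc |Real.sin (2 * π * a)| * (2 * π * a ^ 2)⁻¹ ≤ 1 * (2 * π * a ^ 2)⁻¹ :=
          mul_le_mul_of_nonneg_right (Real.abs_sin_le_one _) (by positivity)
      _ = (2 * π * a ^ 2)⁻¹ := one_mul _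
  have hsinI : |∫ u in a..b, Real.sin (2 * π * u) / (π * u ^ 3)| ≤ (2 * π * a ^ 2)⁻¹ := by
    have hbd : IntervalIntegrable (fun u : ℝ => π⁻¹ * (u ^ 3)⁻¹) volume a b := by
      apply cont_on_ne_zero ha0 hab
      intro u hu
      exact continuousAt_const.mul ((continuousAt_id.pow 3).inv₀ (pow_ne_zero _ hu))
    have h := intervalIntegral.norm_integral_le_abs_of_norm_le (f := fun u => Real.sin (2 * π * u) / (π * u ^ 3))
      (g := fun u => π⁻¹ * (u ^ 3)⁻¹) (μ := volume) (a := a) (b := b) ?_ hbd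
    · rw [Real.norm_eq_abs] at h
      refine h.trans ?_
      rw [intervalIntegral.integral_const_mul, integral_inv_cube ha0 hab]
      have h1 : (0:ℝ) ≤ (b ^ 2)⁻¹ := by positivity
      have h2 : π⁻¹ * (((a ^ 2)⁻¹ - (b ^ 2)⁻¹) / 2) ≤ (2 * π * a ^ 2)⁻¹ := by
        rw [mul_inv, mul_inv]
        have hπ : (0:ℝ) < π⁻¹ := by positivity
        have : ((a ^ 2)⁻¹ - (b ^ 2)⁻¹) / 2 ≤ (a ^ 2)⁻¹ / 2 := by linarith
        calc π⁻¹ * (((a ^ 2)⁻¹ - (b ^ 2)⁻¹) / 2) ≤ π⁻¹ * ((a ^ 2)⁻¹ / 2) :=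
              mul_le_mul_of_nonneg_left this hπ.le
          _ = 2⁻¹ * π⁻¹ * (a ^ 2)⁻¹ := by ring
      rw [abs_of_nonneg]
      · exact h2
      · rw [mul_comm]
        apply mul_nonneg _ (by positivity)
        have : (b ^ 2)⁻¹ ≤ (a ^ 2)⁻¹ := by
          apply inv_anti₀ (by positivity); nlinarith
        linarith
    · filter_upwards [ae_restrict_mem measurableSet_uIoc] with u hu
      rw [Set.uIoc_of_le hab] at hu
      have hu0 : 0 < u := lt_of_lt_of_le ha0 hu.1.le
      rw [Real.norm_eq_abs, abs_div, div_eq_mul_inv]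
      have e1 : |π * u ^ 3|⁻¹ = π⁻¹ * (u ^ 3)⁻¹ := by
        rw [abs_of_nonneg (by positivity), mul_inv]
      rw [e1]
      calc |Real.sin (2 * π * u)| * (π⁻¹ * (u ^ 3)⁻¹) ≤ 1 * (π⁻¹ * (u ^ 3)⁻¹) :=
            mul_le_mul_of_nonneg_right (Real.abs_sin_le_one _) (by positivity)
        _ = π⁻¹ * (u ^ 3)⁻¹ := one_mul _
  calc |Real.sin (2 * π * b) * (2 * π * b ^ 2)⁻¹ - Real.sin (2 * π * a) * (2 * π * a ^ 2)⁻¹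
        + ∫ u in a..b, Real.sin (2 * π * u) / (π * u ^ 3)|
      ≤ |Real.sin (2 * π * b) * (2 * π * b ^ 2)⁻¹| + |Real.sin (2 * π * a) * (2 * π * a ^ 2)⁻¹|
        + |∫ u in a..b, Real.sin (2 * π * u) / (π * u ^ 3)| := by
        exact (abs_add_le _ _).trans (add_le_add_left (abs_sub _ _) _)
    _ ≤ (2 * π * a ^ 2)⁻¹ + (2 * π * a ^ 2)⁻¹ + (2 * π * a ^ 2)⁻¹ :=
        add_le_add (add_le_add hFb hFa) hsinI
    _ ≤ (a ^ 2)⁻¹ := by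
        rw [mul_inv, mul_inv]
        have hπ : 3 ≤ π := by linarith [Real.pi_gt_three]
        have h2 : (2 * π)⁻¹ ≤ 6⁻¹ := by
          rw [inv_le_inv₀ (by positivity) (by norm_num)]; linarith
        have ha2 : (0:ℝ) ≤ (a ^ 2)⁻¹ := by positivity
        have : (2:ℝ)⁻¹ * π⁻¹ * (a ^ 2)⁻¹ ≤ 6⁻¹ * (a ^ 2)⁻¹ := by
          rw [← mul_inv]
          exact mul_le_mul_of_nonneg_right h2 ha2
        linarith

lemma H_nonneg {N x : ℝ} (hN : 0 ≤ N) : 0 ≤ ∫ u in x..(x + N), gg u :=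
  intervalIntegral.integral_nonneg (by linarith) (fun u _ => gg_nonneg u)

lemma H_le_two {N x : ℝ} (hx : 0 ≤ x) (hN : 1 ≤ N) :
    (∫ u in x..(x + N), gg u) ≤ 2 := by
  have h1 : x ≤ x + 1 := by linarith
  have h2 : x + 1 ≤ x + N := by linarith
  rw [← intervalIntegral.integral_add_adjacent_intervals (gg_int x (x + 1)) (gg_int (x + 1) (x + N))]
  have hA : (∫ u in x..(x + 1), gg u) ≤ 1 := by
    calc (∫ u in x..(x + 1), gg u) ≤ ∫ u in x..(x + 1), (1 : ℝ) :=
          intervalIntegral.integral_mono_on h1 (gg_int _ _) intervalIntegrable_const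
            (fun u _ => gg_le_one u)
      _ = 1 := by simp
  have hB : (∫ u in (x + 1)..(x + N), gg u) ≤ 1 := by
    have hb : IntervalIntegrable (fun u : ℝ => (π ^ 2)⁻¹ * (u ^ 2)⁻¹) volume (x + 1) (x + N) := by
      apply cont_on_ne_zero (by linarith) h2
      intro u hu
      exact continuousAt_const.mul ((continuousAt_id.pow 2).inv₀ (pow_ne_zero _ hu))
    have hle : (∫ u in (x + 1)..(x + N), gg u) ≤ ∫ u in (x + 1)..(x + N), (π ^ 2)⁻¹ * (u ^ 2)⁻¹ := by
      apply intervalIntegral.integral_mono_on h2 (gg_int _ _) hb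
      intro u hu
      have hu1 : 1 ≤ u := by have := hu.1; linarith
      rw [gg, div_eq_mul_inv, mul_inv]
      calc Real.sin (π * u) ^ 2 * ((π ^ 2)⁻¹ * (u ^ 2)⁻¹) ≤ 1 * ((π ^ 2)⁻¹ * (u ^ 2)⁻¹) :=
            mul_le_mul_of_nonneg_right (Real.sin_sq_le_one _) (by positivity)
        _ = (π ^ 2)⁻¹ * (u ^ 2)⁻¹ := one_mul _
    refine hle.trans ?_
    rw [intervalIntegral.integral_const_mul, integral_inv_sq' (by linarith) h2]
    have hπ1 : (π ^ 2)⁻¹ ≤ 1 := by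
      rw [inv_le_one_iff₀]; right; nlinarith [Real.pi_gt_three]
    have h3 : (x + 1)⁻¹ ≤ 1 := by
      rw [inv_le_one_iff₀]; right; linarith
    have h4 : (x + N)⁻¹ ≤ (x + 1)⁻¹ := by
      apply inv_anti₀ (by linarith) (by linarith)
    have h5 : (0:ℝ) ≤ (x + N)⁻¹ := by positivity
    calc (π ^ 2)⁻¹ * ((x + 1)⁻¹ - (x + N)⁻¹) ≤ 1 * ((x + 1)⁻¹ - (x + N)⁻¹) :=
          mul_le_mul_of_nonneg_right hπ1 (by linarith)
      _ ≤ 1 := by linarith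
  linarith

lemma H_est {N x : ℝ} (hx : 1 ≤ x) (hN : 1 ≤ N) :
    |(∫ u in x..(x + N), gg u) - 1 / (2 * π ^ 2) * (x⁻¹ - (x + N)⁻¹)| ≤ (x ^ 2)⁻¹ := by
  have hx0 : 0 < x := lt_of_lt_of_le one_pos hx
  have hxN : x ≤ x + N := by linarith
  have hgg_eq : ∀ u ∈ Set.uIcc x (x + N),
      gg u = 1 / (2 * π ^ 2) * (u ^ 2)⁻¹ - 1 / (2 * π ^ 2) * (Real.cos (2 * π * u) / u ^ 2) := by
    intro u hu
    rw [Set.uIcc_of_le hxN] at hu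
    have hu0 : u ≠ 0 := (lt_of_lt_of_le hx0 hu.1).ne'
    rw [gg, Real.sin_sq_eq_half_sub]
    have e : 2 * (π * u) = 2 * π * u := by ring
    rw [e]
    have hπ := Real.pi_ne_zero
    simp only [div_eq_mul_inv, mul_inv, one_div]
    ring
  have hint1 : IntervalIntegrable (fun u : ℝ => (u ^ 2)⁻¹) volume x (x + N) := by
    apply cont_on_ne_zero hx0 hxN
    intro u hu
    exact (continuousAt_id.pow 2).inv₀ (pow_ne_zero _ hu)
  have hint2 : IntervalIntegrable (fun u => Real.cos (2 * π * u) / u ^ 2) volume x (x + N) := by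
    apply cont_on_ne_zero hx0 hxN
    intro u hu
    exact (Real.continuous_cos.continuousAt.comp (by fun_prop)).div (by fun_prop) (by positivity)
  have hsplit : (∫ u in x..(x + N), gg u)
      = 1 / (2 * π ^ 2) * (∫ u in x..(x + N), (u ^ 2)⁻¹)
        - 1 / (2 * π ^ 2) * (∫ u in x..(x + N), Real.cos (2 * π * u) / u ^ 2) := by
    rw [intervalIntegral.integral_congr hgg_eq,
      intervalIntegral.integral_sub (hint1.const_mul _) (hint2.const_mul _),
      intervalIntegral.integral_const_mul, intervalIntegral.integral_const_mul]
  rw [hsplit, integral_inv_sq' hx0 hxN]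
  have e2 : 1 / (2 * π ^ 2) * (x⁻¹ - (x + N)⁻¹)
      - 1 / (2 * π ^ 2) * (∫ u in x..(x + N), Real.cos (2 * π * u) / u ^ 2)
      - 1 / (2 * π ^ 2) * (x⁻¹ - (x + N)⁻¹)
      = -(1 / (2 * π ^ 2) * (∫ u in x..(x + N), Real.cos (2 * π * u) / u ^ 2)) := by ring
  rw [e2, abs_neg, abs_mul]
  have hc : |1 / (2 * π ^ 2)| ≤ 1 := by
    rw [abs_of_nonneg (by positivity)]
    rw [div_le_one (by positivity)]
    nlinarith [Real.pi_gt_three]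
  calc |1 / (2 * π ^ 2)| * |∫ u in x..(x + N), Real.cos (2 * π * u) / u ^ 2|
      ≤ 1 * (x ^ 2)⁻¹ := mul_le_mul hc (osc_bound hx hxN) (abs_nonneg _) zero_le_one
    _ = (x ^ 2)⁻¹ := one_mul _

/-- there is a constant `C` (independent of `N`) such that for all `N ≥ 1`,
`|∫₀^N ∫₀^N sin²(π(x+y))/(π²(x+y)²) dx dy − (1/(2π²))·log N| ≤ C`;
in particular the double integral equals `(1/(2π²))·log N·(1+o(1))`. -/
theorem stmt1 :
    ∃ C : ℝ, ∀ N : ℝ, 1 ≤ N →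
      |(∫ x in (0:ℝ)..N, ∫ y in (0:ℝ)..N,
          Real.sin (π * (x + y)) ^ 2 / (π ^ 2 * (x + y) ^ 2))
        - (1 / (2 * π ^ 2)) * Real.log N| ≤ C := by
  use 4
  intro N hN
  have hN0 : 0 < N := lt_of_lt_of_le one_pos hN
  -- rewrite inner integral
  have hinner : ∀ x : ℝ, (∫ y in (0:ℝ)..N,
      Real.sin (π * (x + y)) ^ 2 / (π ^ 2 * (x + y) ^ 2)) = ∫ u in x..(x + N), gg u := by
    intro x
    have h := intervalIntegral.integral_comp_add_left (a := (0:ℝ)) (b := N) gg x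
    rw [add_zero] at h
    exact h
  have houter : (∫ x in (0:ℝ)..N, ∫ y in (0:ℝ)..N,
        Real.sin (π * (x + y)) ^ 2 / (π ^ 2 * (x + y) ^ 2))
      = ∫ x in (0:ℝ)..N, (∫ u in x..(x + N), gg u) :=
    intervalIntegral.integral_congr (fun x _ => hinner x)
  rw [houter]
  -- split outer integral at 1
  rw [← intervalIntegral.integral_add_adjacent_intervals (H_int N 0 1) (H_int N 1 N)]
  -- bound the [0,1] piece
  have hA : |∫ x in (0:ℝ)..1, (∫ u in x..(x + N), gg u)| ≤ 2 := by
    have h := intervalIntegral.norm_integral_le_of_norm_le_const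
      (f := fun x => ∫ u in x..(x + N), gg u) (a := (0:ℝ)) (b := 1) (C := 2) ?_
    · simpa using h
    · intro x hx
      rw [Set.uIoc_of_le zero_le_one] at hx
      rw [Real.norm_eq_abs, abs_of_nonneg (H_nonneg (by linarith))]
      exact H_le_two hx.1.le hN
  -- main-term integrability on [1,N]
  have hmain_int : IntervalIntegrable (fun x : ℝ => 1 / (2 * π ^ 2) * (x⁻¹ - (x + N)⁻¹))
      volume 1 N := by
    apply ContinuousOn.intervalIntegrable
    intro x hx
    rw [Set.uIcc_of_le hN] at hx
    have h1 : x ≠ 0 := (lt_of_lt_of_le one_pos hx.1).ne'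
    have h2 : id x + N ≠ 0 := by simp only [id]; intro h; nlinarith [hx.1]
    exact (continuousAt_const.mul ((continuousAt_id.inv₀ h1).sub
      ((continuousAt_id.add continuousAt_const).inv₀ h2))).continuousWithinAt
  -- the error on [1,N]
  have hE : |(∫ x in (1:ℝ)..N, (∫ u in x..(x + N), gg u))
      - ∫ x in (1:ℝ)..N, 1 / (2 * π ^ 2) * (x⁻¹ - (x + N)⁻¹)| ≤ 1 := by
    rw [← intervalIntegral.integral_sub (H_int N 1 N) hmain_int]
    have hbd : IntervalIntegrable (fun x : ℝ => (x ^ 2)⁻¹) volume 1 N := by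
      apply cont_on_ne_zero one_pos hN
      intro u hu
      exact (continuousAt_id.pow 2).inv₀ (pow_ne_zero _ hu)
    have h := intervalIntegral.norm_integral_le_abs_of_norm_le
      (f := fun x => (∫ u in x..(x + N), gg u) - 1 / (2 * π ^ 2) * (x⁻¹ - (x + N)⁻¹))
      (g := fun x => (x ^ 2)⁻¹) (μ := volume) (a := 1) (b := N) ?_ hbd
    · rw [Real.norm_eq_abs] at h
      refine h.trans ?_
      rw [integral_inv_sq' one_pos hN]
      have h1 : (0:ℝ) < N⁻¹ := by positivity
      have h2 : N⁻¹ ≤ 1 := by rw [inv_le_one_iff₀]; right; exact hN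
      rw [abs_of_nonneg (by norm_num; linarith)]
      norm_num
      linarith
    · filter_upwards [ae_restrict_mem measurableSet_uIoc] with x hx
      rw [Set.uIoc_of_le hN] at hx
      rw [Real.norm_eq_abs]
      exact H_est hx.1.le hN
  -- value of the main term
  have hlogs : (∫ x in (1:ℝ)..N, 1 / (2 * π ^ 2) * (x⁻¹ - (x + N)⁻¹))
      = 1 / (2 * π ^ 2) * (Real.log N - Real.log ((N + N) / (1 + N))) := by
    have hi1 : IntervalIntegrable (fun x : ℝ => x⁻¹) volume 1 N := by
      apply cont_on_ne_zero one_pos hN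
      intro u hu
      exact continuousAt_id.inv₀ hu
    have hi2 : IntervalIntegrable (fun x : ℝ => (x + N)⁻¹) volume 1 N := by
      apply ContinuousOn.intervalIntegrable
      intro x hx
      rw [Set.uIcc_of_le hN] at hx
      have h2 : id x + N ≠ 0 := by simp only [id]; intro h; nlinarith [hx.1]
      exact ((continuousAt_id.add continuousAt_const).inv₀ h2).continuousWithinAt
    have e1 : (∫ x in (1:ℝ)..N, x⁻¹) = Real.log N := by
      rw [integral_inv_of_pos one_pos hN0, div_one]
    have e2 : (∫ x in (1:ℝ)..N, (x + N)⁻¹) = Real.log ((N + N) / (1 + N)) := by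
      have h := intervalIntegral.integral_comp_add_right (a := (1:ℝ)) (b := N)
        (fun u : ℝ => u⁻¹) N
      rw [h, integral_inv_of_pos (by linarith) (by linarith)]
    rw [intervalIntegral.integral_const_mul, intervalIntegral.integral_sub hi1 hi2, e1, e2]
  -- bounds on the log correction
  have hL0 : 0 ≤ Real.log ((N + N) / (1 + N)) := by
    apply Real.log_nonneg
    rw [le_div_iff₀ (by linarith)]
    linarith
  have hL1 : Real.log ((N + N) / (1 + N)) ≤ 1 := by
    have h2 : (N + N) / (1 + N) ≤ 2 := by
      rw [div_le_iff₀ (by linarith)]; linarith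
    calc Real.log ((N + N) / (1 + N)) ≤ Real.log 2 :=
          Real.log_le_log (by positivity) h2
      _ ≤ 1 := by
            have := Real.log_le_sub_one_of_pos (show (0:ℝ) < 2 by norm_num)
            linarith
  have hc0 : (0:ℝ) ≤ 1 / (2 * π ^ 2) := by positivity
  have hc1 : 1 / (2 * π ^ 2) ≤ 1 := by
    rw [div_le_one (by positivity)]
    nlinarith [Real.pi_gt_three]
  -- assemble
  set A := ∫ x in (0:ℝ)..1, (∫ u in x..(x + N), gg u) with hAdef
  set B := ∫ x in (1:ℝ)..N, (∫ u in x..(x + N), gg u) with hBdef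
  set c := 1 / (2 * π ^ 2) with hcdef
  set L := Real.log ((N + N) / (1 + N)) with hLdef
  have key : A + B - c * Real.log N = A + ((B - c * (Real.log N - L)) - c * L) := by ring
  rw [key]
  have hcL : |c * L| ≤ 1 := by
    rw [abs_of_nonneg (mul_nonneg hc0 hL0)]
    calc c * L ≤ 1 * L := mul_le_mul_of_nonneg_right hc1 hL0
      _ ≤ 1 := by rw [one_mul]; exact hL1
  have hE' : |B - c * (Real.log N - L)| ≤ 1 := by
    rw [hcdef, hLdef, ← hlogs]
    exact hE
  calc |A + (B - c * (Real.log N - L) - c * L)|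
      ≤ |A| + |B - c * (Real.log N - L) - c * L| := abs_add_le _ _
    _ ≤ |A| + (|B - c * (Real.log N - L)| + |c * L|) := by
        exact add_le_add_right (abs_sub _ _) _
    _ ≤ 2 + (1 + 1) := add_le_add hA (add_le_add hE' hcL)
    _ = 4 := by norm_num
end

section
/- Let A be a self-adjoint trace-class operator with 0 ≤ A ≤ 1 and let x ∈ ℝ with |e^x − 1| < 1. Then log det(1 + (e^x − 1)A) − x·Tr A = (x²/2)·Tr(A(1−A)) + R, where |R| ≤ C|x|³·Tr(A(1−A)) with a constant C depending only on a bound for |x|. -/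
open MeasureTheory Finset

private lemma geo_le {r : ℝ} (h0 : 0 ≤ r) (h1 : r < 1) (n : ℕ) :
    ∑ i ∈ Finset.range n, r ^ i ≤ 1 / (1 - r) := by
  have hr : (0:ℝ) < 1 - r := by linarith
  rw [geom_sum_eq (by linarith : r ≠ 1)]
  have h2 : (r ^ n - 1) / (r - 1) = (1 - r ^ n) / (1 - r) := by
    rw [div_eq_div_iff (by linarith) (by linarith)]; ring
  rw [h2]
  have : (0:ℝ) ≤ r ^ n := pow_nonneg h0 n
  gcongr <;> linarith

private lemma pow_sub_abs_le {t : ℝ} (ht0 : 0 ≤ t) (ht1 : t ≤ 1) (m : ℕ) :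
    |t ^ (m + 1) - t| ≤ (m + 1 : ℝ) * (t * (1 - t)) := by
  have h1 : t ^ (m + 1) ≤ t := by
    calc t ^ (m + 1) ≤ t ^ 1 := pow_le_pow_of_le_one ht0 ht1 (by omega)
    _ = t := pow_one t
  have hb : 1 + (m : ℝ) * (t - 1) ≤ t ^ m := by
    have := one_add_mul_le_pow (a := t - 1) (by linarith) m
    simpa using this
  have h2 : t - t ^ (m + 1) ≤ (m + 1 : ℝ) * (t * (1 - t)) := by
    have : t * (1 + (m : ℝ) * (t - 1)) ≤ t * t ^ m := by
      exact mul_le_mul_of_nonneg_left hb ht0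
    have hm : (0:ℝ) ≤ m := Nat.cast_nonneg m
    nlinarith [this, pow_succ t m]
  rw [abs_of_nonpos (by linarith)]
  linarith

private lemma core {y t : ℝ} (hy0 : -1 ≤ y) (hy1 : y ≤ 0) (ht0 : 0 ≤ t) (ht1 : t ≤ 1) :
    |Real.log (1 + (Real.exp y - 1) * t) - t * y - y ^ 2 / 2 * (t * (1 - t))|
      ≤ 4 * |y| ^ 3 * (t * (1 - t)) := by
  set w : ℝ := Real.exp y - 1 with hw
  have hey : (0:ℝ) < Real.exp y := Real.exp_pos y
  have hwle : w ≤ 0 := by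
    have : Real.exp y ≤ 1 := by simpa using Real.exp_le_exp.mpr hy1
    linarith
  have hwgt : -1 < w := by linarith
  have habsw : |w| = 1 - Real.exp y := by rw [abs_of_nonpos hwle]; ring
  have hwy : |w| ≤ |y| := by
    have h1 : y + 1 ≤ Real.exp y := Real.add_one_le_exp y
    rw [habsw, abs_of_nonpos hy1]; linarith
  have heinv : Real.exp (-1) ≤ Real.exp y := Real.exp_le_exp.mpr hy0
  have h3 : (1:ℝ)/3 ≤ Real.exp y := by
    have h := Real.exp_one_lt_d9
    have : Real.exp (-1) = 1 / Real.exp 1 := by rw [Real.exp_neg]; ring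
    rw [this] at heinv
    have hpos : (0:ℝ) < Real.exp 1 := Real.exp_pos 1
    have : (1:ℝ)/3 ≤ 1 / Real.exp 1 := by
      rw [div_le_div_iff₀ (by norm_num) hpos]; nlinarith
    linarith
  have hwlt1 : |w| < 1 := by rw [habsw]; linarith
  have hwinv : 1 / (1 - |w|) ≤ 3 := by
    rw [habsw]
    have : (0:ℝ) < 1 - (1 - Real.exp y) := by linarith
    rw [div_le_iff₀ (by linarith)]; linarith
  -- exp y = 1 + w, so log(1+w) = y
  have hlogw : Real.log (1 + w) = y := by
    rw [hw]; simp [Real.log_exp]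
  have hyabs : |y| = -y := abs_of_nonpos hy1
  have ht : 0 ≤ t * (1 - t) := mul_nonneg ht0 (by linarith)
  -- partial sums
  set A : ℕ → ℝ → ℝ := fun n s => -(∑ i ∈ Finset.range n, (-(w*s)) ^ (i+1) / (i+1)) with hA
  have hApprox : ∀ (n : ℕ) (s : ℝ), 0 ≤ s → s ≤ 1 →
      |Real.log (1 + w * s) - A n s| ≤ 3 * |w| ^ (n+1) := by
    intro n s hs0 hs1
    have hws : |(-(w*s))| < 1 := by
      rw [abs_neg, abs_mul]
      calc |w| * |s| ≤ |w| * 1 := by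
            apply mul_le_mul_of_nonneg_left _ (abs_nonneg w)
            rw [abs_of_nonneg hs0]; exact hs1
      _ = |w| := mul_one _
      _ < 1 := hwlt1
    have := Real.abs_log_sub_add_sum_range_le hws n
    have heq : 1 - -(w*s) = 1 + w * s := by ring
    rw [heq] at this
    have h1 : |Real.log (1 + w * s) - A n s|
        = |(∑ i ∈ Finset.range n, (-(w*s)) ^ (i+1) / (i+1)) + Real.log (1 + w*s)| := by
      simp only [hA]
      rw [sub_neg_eq_add, add_comm]
    rw [h1]
    refine this.trans ?_
    have hwsle : |(-(w*s))| ≤ |w| := by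
      rw [abs_neg, abs_mul]
      calc |w| * |s| ≤ |w| * 1 := by
            apply mul_le_mul_of_nonneg_left _ (abs_nonneg w)
            rw [abs_of_nonneg hs0]; exact hs1
      _ = |w| := mul_one _
    have hnum : |(-(w*s))| ^ (n+1) ≤ |w| ^ (n+1) := pow_le_pow_left₀ (abs_nonneg _) hwsle _
    have hden : 1 - |w| ≤ 1 - |(-(w*s))| := by linarith
    have hdenpos : (0:ℝ) < 1 - |(-(w*s))| := by linarith
    calc |(-(w*s))| ^ (n+1) / (1 - |(-(w*s))|) ≤ |w| ^ (n+1) / (1 - |w|) := by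
          apply div_le_div₀ (pow_nonneg (abs_nonneg _) _) hnum (by linarith) hden
    _ = |w| ^ (n+1) * (1 / (1 - |w|)) := by ring
    _ ≤ |w| ^ (n+1) * 3 := by
          apply mul_le_mul_of_nonneg_left hwinv (pow_nonneg (abs_nonneg _) _)
    _ = 3 * |w| ^ (n+1) := by ring
  -- key estimate for each n
  have key : ∀ n : ℕ,
      |Real.log (1 + w * t) - t * y - y ^ 2 / 2 * (t * (1 - t))|
        ≤ 4 * |y| ^ 3 * (t * (1 - t)) + 6 * |w| ^ (n + 3) := by
    intro n
    have hAt := hApprox (n + 2) t ht0 ht1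
    have hA1 := hApprox (n + 2) 1 zero_le_one le_rfl
    rw [mul_one, hlogw] at hA1
    -- rewrite the difference of partial sums
    set c : ℕ → ℝ := fun i => (-w) ^ (i+1) * (t - t ^ (i+1)) / (i+1) with hc
    have hD : A (n+2) t - t * A (n+2) 1 = ∑ i ∈ Finset.range (n+2), c i := by
      simp only [hA]
      have h0 : -(∑ i ∈ Finset.range (n+2), (-(w*t)) ^ (i+1) / (i+1))
          - t * -(∑ i ∈ Finset.range (n+2), (-(w*1)) ^ (i+1) / (i+1))
          = (∑ i ∈ Finset.range (n+2), t * ((-(w*1)) ^ (i+1) / (i+1)))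
            - ∑ i ∈ Finset.range (n+2), (-(w*t)) ^ (i+1) / (i+1) := by
        rw [← Finset.mul_sum]; ring
      rw [h0, ← Finset.sum_sub_distrib]
      refine Finset.sum_congr rfl (fun i _ => ?_)
      rw [hc, show -(w*1) = -w by ring, show -(w*t) = -w*t by ring, mul_pow]
      ring
    -- split the sum
    have hsplit : ∑ i ∈ Finset.range (n+2), c i
        = c 0 + c 1 + ∑ i ∈ Finset.Ico 2 (n+2), c i := by
      rw [Finset.range_eq_Ico,
        ← Finset.sum_Ico_consecutive c (by omega : 0 ≤ 2) (by omega : 2 ≤ n+2)]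
      congr 1
      rw [← Finset.range_eq_Ico]
      rw [Finset.sum_range_succ, Finset.sum_range_one]
    have hc0 : c 0 = 0 := by simp [hc]
    have hc1 : c 1 = w ^ 2 / 2 * (t * (1 - t)) := by
      simp only [hc]; norm_num; ring
    -- bound the tail
    have htail : |∑ i ∈ Finset.Ico 2 (n+2), c i| ≤ 3 * |w| ^ 3 * (t * (1 - t)) := by
      calc |∑ i ∈ Finset.Ico 2 (n+2), c i| ≤ ∑ i ∈ Finset.Ico 2 (n+2), |c i| :=
            Finset.abs_sum_le_sum_abs _ _
      _ ≤ ∑ i ∈ Finset.Ico 2 (n+2), |w| ^ (i+1) * (t * (1 - t)) := by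
            apply Finset.sum_le_sum
            intro i _
            rw [hc]
            rw [abs_div, abs_mul, abs_pow, abs_neg]
            have hip : (0:ℝ) < (i:ℝ) + 1 := by positivity
            rw [abs_of_pos hip, div_le_iff₀ hip]
            have h1 : |t - t ^ (i+1)| ≤ ((i:ℝ)+1) * (t * (1-t)) := by
              rw [abs_sub_comm]
              have := pow_sub_abs_le ht0 ht1 i
              simpa using this
            calc |w| ^ (i+1) * |t - t ^ (i+1)|
                ≤ |w| ^ (i+1) * (((i:ℝ)+1) * (t * (1-t))) :=
                  mul_le_mul_of_nonneg_left h1 (pow_nonneg (abs_nonneg _) _)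
            _ = |w| ^ (i+1) * (t * (1-t)) * ((i:ℝ)+1) := by ring
      _ = (∑ i ∈ Finset.Ico 2 (n+2), |w| ^ (i+1)) * (t * (1 - t)) := by
            rw [Finset.sum_mul]
      _ ≤ 3 * |w| ^ 3 * (t * (1 - t)) := by
            apply mul_le_mul_of_nonneg_right _ ht
            rw [Finset.sum_Ico_eq_sum_range]
            have h1 : ∀ i ∈ Finset.range (n+2-2), |w| ^ (2+i+1) = |w| ^ 3 * |w| ^ i := by
              intro i _; rw [← pow_add]; ring_nf
            rw [Finset.sum_congr rfl h1, ← Finset.mul_sum]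
            calc |w| ^ 3 * ∑ i ∈ Finset.range (n+2-2), |w| ^ i
                ≤ |w| ^ 3 * (1 / (1 - |w|)) :=
                  mul_le_mul_of_nonneg_left (geo_le (abs_nonneg w) hwlt1 _)
                    (pow_nonneg (abs_nonneg _) _)
            _ ≤ |w| ^ 3 * 3 :=
                  mul_le_mul_of_nonneg_left hwinv (pow_nonneg (abs_nonneg _) _)
            _ = 3 * |w| ^ 3 := by ring
    -- |w^2 - y^2| ≤ 2|y|^3
    have hwy2 : |w ^ 2 / 2 - y ^ 2 / 2| ≤ |y| ^ 3 := by
      have h1 : |w - y| ≤ y ^ 2 := by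
        have := Real.abs_exp_sub_one_sub_id_le (x := y) (by rw [hyabs]; linarith)
        simpa [hw] using this
      have h2 : |w + y| ≤ 2 * |y| := by
        calc |w + y| ≤ |w| + |y| := abs_add_le _ _
        _ ≤ 2 * |y| := by linarith
      have h3 : |w ^ 2 - y ^ 2| = |w - y| * |w + y| := by
        rw [← abs_mul]; congr 1; ring
      have h4 : |w ^ 2 - y ^ 2| ≤ y ^ 2 * (2 * |y|) := by
        rw [h3]; exact mul_le_mul h1 h2 (abs_nonneg _) (sq_nonneg y)
      have h5 : y ^ 2 = |y| ^ 2 := (sq_abs y).symm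
      calc |w ^ 2 / 2 - y ^ 2 / 2| = |w ^ 2 - y ^ 2| / 2 := by
            rw [show w ^ 2 / 2 - y ^ 2 / 2 = (w ^ 2 - y ^ 2) / 2 by ring, abs_div, abs_two]
      _ ≤ y ^ 2 * (2 * |y|) / 2 := by linarith
      _ = |y| ^ 3 := by rw [h5]; ring
    have hw3 : |w| ^ 3 ≤ |y| ^ 3 := pow_le_pow_left₀ (abs_nonneg w) hwy 3
    -- assemble
    have hdecomp : Real.log (1 + w * t) - t * y - y ^ 2 / 2 * (t * (1 - t))
        = (Real.log (1 + w * t) - A (n+2) t) - t * (y - A (n+2) 1)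
          + ((w ^ 2 / 2 - y ^ 2 / 2) * (t * (1 - t)))
          + ∑ i ∈ Finset.Ico 2 (n+2), c i := by
      have : A (n+2) t - t * A (n+2) 1
          = w ^ 2 / 2 * (t * (1 - t)) + ∑ i ∈ Finset.Ico 2 (n+2), c i := by
        rw [hD, hsplit, hc0, hc1]; ring
      linarith [this]
    rw [hdecomp]
    have e1 : |Real.log (1 + w * t) - A (n+2) t| ≤ 3 * |w| ^ (n+3) := by
      exact hAt
    have e2 : |t * (y - A (n+2) 1)| ≤ 3 * |w| ^ (n+3) := by
      rw [abs_mul, abs_of_nonneg ht0]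
      calc t * |y - A (n+2) 1| ≤ 1 * (3 * |w| ^ (n+3)) := by
            apply mul_le_mul ht1 _ (abs_nonneg _) zero_le_one
            exact hA1
      _ = 3 * |w| ^ (n+3) := by ring
    have e3 : |(w ^ 2 / 2 - y ^ 2 / 2) * (t * (1 - t))| ≤ |y| ^ 3 * (t * (1 - t)) := by
      rw [abs_mul, abs_of_nonneg ht]
      exact mul_le_mul_of_nonneg_right hwy2 ht
    calc |Real.log (1 + w * t) - A (n+2) t - t * (y - A (n+2) 1)
          + (w ^ 2 / 2 - y ^ 2 / 2) * (t * (1 - t)) + ∑ i ∈ Finset.Ico 2 (n+2), c i|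
        ≤ |Real.log (1 + w * t) - A (n+2) t| + |t * (y - A (n+2) 1)|
          + |(w ^ 2 / 2 - y ^ 2 / 2) * (t * (1 - t))| + |∑ i ∈ Finset.Ico 2 (n+2), c i| := by
          calc _ ≤ |Real.log (1 + w * t) - A (n+2) t - t * (y - A (n+2) 1)
              + (w ^ 2 / 2 - y ^ 2 / 2) * (t * (1 - t))| + |∑ i ∈ Finset.Ico 2 (n+2), c i| :=
                abs_add_le _ _
          _ ≤ _ := by
                have := abs_add_le (Real.log (1 + w * t) - A (n+2) t - t * (y - A (n+2) 1))
                  ((w ^ 2 / 2 - y ^ 2 / 2) * (t * (1 - t)))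
                have h2 := abs_sub (Real.log (1 + w * t) - A (n+2) t) (t * (y - A (n+2) 1))
                linarith
      _ ≤ 3 * |w| ^ (n+3) + 3 * |w| ^ (n+3) + |y| ^ 3 * (t * (1-t))
          + 3 * |w| ^ 3 * (t * (1-t)) := by linarith [e1, e2, e3, htail]
      _ ≤ 4 * |y| ^ 3 * (t * (1 - t)) + 6 * |w| ^ (n + 3) := by nlinarith [hw3, ht]
  -- take the limit n → ∞
  have hlim : Filter.Tendsto (fun n : ℕ => 4 * |y| ^ 3 * (t * (1 - t)) + 6 * |w| ^ (n + 3))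
      Filter.atTop (nhds (4 * |y| ^ 3 * (t * (1 - t)) + 6 * 0)) := by
    apply Filter.Tendsto.const_add
    apply Filter.Tendsto.const_mul
    have h1 : Filter.Tendsto (fun n : ℕ => |w| ^ n) Filter.atTop (nhds 0) :=
      tendsto_pow_atTop_nhds_zero_of_lt_one (abs_nonneg w) hwlt1
    exact h1.comp (Filter.tendsto_add_atTop_nat 3)
  have := ge_of_tendsto' hlim key
  simpa using this

private lemma pointwise {x t : ℝ} (hx1 : |x| ≤ 1) (ht0 : 0 ≤ t) (ht1 : t ≤ 1) :
    |Real.log (1 + (Real.exp x - 1) * t) - x * t - x ^ 2 / 2 * (t * (1 - t))|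
      ≤ 4 * |x| ^ 3 * (t * (1 - t)) := by
  rcases le_or_gt x 0 with hx | hx
  · have := core (by rw [abs_le] at hx1; exact hx1.1) hx ht0 ht1
    have h : x * t = t * x := by ring
    rw [h]; exact this
  · -- use the symmetry t ↔ 1 - t, x ↔ -x
    have hx0 : -1 ≤ -x := by rw [abs_le] at hx1; linarith
    have h := core (y := -x) (t := 1 - t) hx0 (by linarith) (by linarith) (by linarith)
    have hz : (0:ℝ) < 1 + (Real.exp x - 1) * t := by
      have : 1 ≤ Real.exp x := by
        have := Real.add_one_le_exp x; nlinarith [Real.exp_pos x, hx]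
      nlinarith
    have hid : 1 + (Real.exp (-x) - 1) * (1 - t)
        = Real.exp (-x) * (1 + (Real.exp x - 1) * t) := by
      rw [Real.exp_neg]
      have hex : Real.exp x ≠ 0 := (Real.exp_pos x).ne'
      field_simp
      ring
    have hlogid : Real.log (1 + (Real.exp (-x) - 1) * (1 - t))
        = -x + Real.log (1 + (Real.exp x - 1) * t) := by
      rw [hid, Real.log_mul (Real.exp_pos (-x)).ne' hz.ne', Real.log_exp]
    have heq : Real.log (1 + (Real.exp (-x) - 1) * (1 - t)) - (1 - t) * (-x)
          - (-x) ^ 2 / 2 * ((1 - t) * (1 - (1 - t)))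
        = Real.log (1 + (Real.exp x - 1) * t) - x * t - x ^ 2 / 2 * (t * (1 - t)) := by
      rw [hlogid]; ring
    rw [heq] at h
    have habs : |(-x)| = |x| := abs_neg x
    rw [habs] at h
    calc |Real.log (1 + (Real.exp x - 1) * t) - x * t - x ^ 2 / 2 * (t * (1 - t))|
        ≤ 4 * |x| ^ 3 * ((1 - t) * (1 - (1 - t))) := h
    _ = 4 * |x| ^ 3 * (t * (1 - t)) := by ring

/-- for a self-adjoint trace-class operator `A` with `0 ≤ A ≤ 1`,
described by its eigenvalue sequence `lam : ℕ → ℝ` with `lam k ∈ [0,1]` and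
`∑ lam k < ∞`, and for `x` with `|e^x − 1| < 1` and `|x| ≤ 1`:
`log det(1+(e^x−1)A) − x·Tr A − (x²/2)·Tr(A(1−A))` is bounded by
`C|x|³·Tr(A(1−A))` with `C` depending only on the bound `1` for `|x|`. -/
theorem stmt6 :
    ∃ C : ℝ, 0 < C ∧ ∀ (lam : ℕ → ℝ), (∀ k, lam k ∈ Set.Icc (0:ℝ) 1) →
      Summable lam → ∀ x : ℝ, |Real.exp x - 1| < 1 → |x| ≤ 1 →
      |(∑' k, Real.log (1 + (Real.exp x - 1) * lam k))
          - x * (∑' k, lam k) - (x ^ 2 / 2) * (∑' k, lam k * (1 - lam k))|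
        ≤ C * |x| ^ 3 * (∑' k, lam k * (1 - lam k)) := by
  refine ⟨4, by norm_num, fun lam hlam hsum x hx hx1 => ?_⟩
  have hterm : ∀ k, |Real.log (1 + (Real.exp x - 1) * lam k) - x * lam k
      - x ^ 2 / 2 * (lam k * (1 - lam k))| ≤ 4 * |x| ^ 3 * (lam k * (1 - lam k)) :=
    fun k => pointwise hx1 (hlam k).1 (hlam k).2
  have hh : Summable (fun k => lam k * (1 - lam k)) := by
    apply Summable.of_nonneg_of_le
        (fun k => mul_nonneg (hlam k).1 (by linarith [(hlam k).2]))
        (fun k => ?_) hsum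
    nlinarith [(hlam k).1, (hlam k).2]
  have hsum3 : Summable (fun k => Real.log (1 + (Real.exp x - 1) * lam k) - x * lam k
      - x ^ 2 / 2 * (lam k * (1 - lam k))) := by
    apply Summable.of_norm_bounded (hh.mul_left (4 * |x| ^ 3))
    intro k
    rw [Real.norm_eq_abs]
    exact hterm k
  have hlog : Summable (fun k => Real.log (1 + (Real.exp x - 1) * lam k)) := by
    have h2 : Summable (fun k => x * lam k + x ^ 2 / 2 * (lam k * (1 - lam k))) :=
      (hsum.mul_left x).add (hh.mul_left (x ^ 2 / 2))
    have := hsum3.add h2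
    convert this using 2 with k
    ring
  have e1 : (∑' k, Real.log (1 + (Real.exp x - 1) * lam k)) - x * (∑' k, lam k)
      - x ^ 2 / 2 * (∑' k, lam k * (1 - lam k))
      = ∑' k, (Real.log (1 + (Real.exp x - 1) * lam k) - x * lam k
        - x ^ 2 / 2 * (lam k * (1 - lam k))) := by
    rw [← tsum_mul_left (a := x), ← tsum_mul_left (a := x ^ 2 / 2),
      ← Summable.tsum_sub hlog (hsum.mul_left x),
      ← Summable.tsum_sub (hlog.sub (hsum.mul_left x)) (hh.mul_left (x ^ 2 / 2))]
  rw [e1]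
  set f : ℕ → ℝ := fun k => Real.log (1 + (Real.exp x - 1) * lam k) - x * lam k
      - x ^ 2 / 2 * (lam k * (1 - lam k)) with hf
  have hn : Summable (fun k => ‖f k‖) := by
    simpa [Real.norm_eq_abs] using hsum3.abs
  calc |∑' k, f k| ≤ ∑' k, |f k| := by
        simpa [Real.norm_eq_abs] using norm_tsum_le_tsum_norm hn
  _ ≤ ∑' k, 4 * |x| ^ 3 * (lam k * (1 - lam k)) := by
        apply Summable.tsum_le_tsum hterm _ (hh.mul_left (4 * |x| ^ 3))
        simpa [Real.norm_eq_abs] using hn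
  _ = 4 * |x| ^ 3 * ∑' k, lam k * (1 - lam k) := tsum_mul_left
end

section
/- For t ∈ [0,1] and |x| small enough, log(1+(e^x−1)t) = xt + (x²/2)·t(1−t) + (x³/6)·t(1−t)·r(t,x) where |r(t,x)| is bounded uniformly in t ∈ [0,1] and |x| ≤ 1. -/
open Set Real

lemma aux_one {g g' g'' : ℝ → ℝ} {M : ℝ}
    (hg : ∀ t ∈ Set.Icc (0:ℝ) 1, HasDerivAt g (g' t) t)
    (hg' : ∀ t ∈ Set.Icc (0:ℝ) 1, HasDerivAt g' (g'' t) t)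
    (hM : ∀ t ∈ Set.Icc (0:ℝ) 1, g'' t ≤ M)
    (h0 : g 0 = 0) (h1 : g 1 = 0) :
    ∀ t ∈ Set.Icc (0:ℝ) 1, -(M/2 * (t*(1-t))) ≤ g t := by
  set φ : ℝ → ℝ := fun t => g t + M/2*(t*(1-t)) with hφdef
  have hq : ∀ t : ℝ, HasDerivAt (fun t : ℝ => t*(1-t)) (1-2*t) t := by
    intro t
    have h := (hasDerivAt_id t).mul ((hasDerivAt_id t).const_sub 1)
    simp only [id_eq] at h
    refine h.congr_deriv ?_
    ring
  have hlin : ∀ t : ℝ, HasDerivAt (fun t : ℝ => M/2*(1-2*t)) (-M) t := by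
    intro t
    have h2 : HasDerivAt (fun t : ℝ => 1-2*t) (-2) t := by
      have h := ((hasDerivAt_id t).const_mul 2).const_sub 1
      simp only [id_eq] at h
      norm_num at h
      exact h
    have h := h2.const_mul (M/2)
    refine h.congr_deriv ?_
    ring
  have hφ : ∀ t ∈ Set.Icc (0:ℝ) 1, HasDerivAt φ (g' t + M/2*(1-2*t)) t := by
    intro t ht
    exact (hg t ht).add ((hq t).const_mul (M/2))
  have hφ' : ∀ t ∈ Set.Icc (0:ℝ) 1,
      HasDerivAt (fun t => g' t + M/2*(1-2*t)) (g'' t - M) t := by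
    intro t ht
    rw [show (fun t => g' t + M/2*(1-2*t)) = fun t => g' t + (fun t : ℝ => M/2*(1-2*t)) t from rfl]
    rw [sub_eq_add_neg]
    exact (hg' t ht).add (hlin t)
  have hconc : ConcaveOn ℝ (Set.Icc (0:ℝ) 1) φ := by
    apply concaveOn_of_hasDerivWithinAt2_nonpos (convex_Icc 0 1)
      (f' := fun t => g' t + M/2*(1-2*t)) (f'' := fun t => g'' t - M)
    · exact fun s hs => (hφ s hs).continuousAt.continuousWithinAt
    · exact fun s hs => (hφ s (interior_subset hs)).hasDerivWithinAt
    · exact fun s hs => (hφ' s (interior_subset hs)).hasDerivWithinAt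
    · intro s hs
      have := hM s (interior_subset hs)
      linarith
  intro t ht
  obtain ⟨ht0, ht1⟩ := ht
  have h := hconc.2 (Set.left_mem_Icc.2 zero_le_one) (Set.right_mem_Icc.2 zero_le_one)
    (by linarith : (0:ℝ) ≤ 1 - t) ht0 (by ring)
  have hφ0 : φ 0 = 0 := by simp [hφdef, h0]
  have hφ1 : φ 1 = 0 := by simp [hφdef, h1]
  simp only [smul_eq_mul, mul_zero, mul_one, zero_add, hφ0, hφ1] at h
  have : (0:ℝ) ≤ φ t := by linarith
  simp only [hφdef] at this
  linarith

lemma aux_bound {g g' g'' : ℝ → ℝ} {M : ℝ}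
    (hg : ∀ t ∈ Set.Icc (0:ℝ) 1, HasDerivAt g (g' t) t)
    (hg' : ∀ t ∈ Set.Icc (0:ℝ) 1, HasDerivAt g' (g'' t) t)
    (hM : ∀ t ∈ Set.Icc (0:ℝ) 1, |g'' t| ≤ M)
    (h0 : g 0 = 0) (h1 : g 1 = 0) :
    ∀ t ∈ Set.Icc (0:ℝ) 1, |g t| ≤ M/2 * (t*(1-t)) := by
  intro t ht
  have hlow := aux_one hg hg' (fun s hs => (abs_le.1 (hM s hs)).2) h0 h1 t ht
  have hup := aux_one (M := M) (g := fun s => -g s) (g' := fun s => -g' s)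
    (g'' := fun s => -g'' s)
    (fun s hs => (hg s hs).neg) (fun s hs => (hg' s hs).neg)
    (fun s hs => by have := (abs_le.1 (hM s hs)).1; linarith)
    (by simp [h0]) (by simp [h1]) t ht
  have hup' : -(M/2 * (t*(1-t))) ≤ -g t := hup
  rw [abs_le]
  exact ⟨hlow, by linarith⟩

set_option maxHeartbeats 1600000 in
/-- there is a constant `C` such that for every `t ∈ [0,1]` and `|x| ≤ 1`,
`log(1+(e^x−1)t) = xt + (x²/2)t(1−t) + (x³/6)t(1−t)·r(t,x)` with `|r(t,x)| ≤ C`. -/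
theorem stmt7 :
    ∃ C : ℝ, ∀ t ∈ Set.Icc (0:ℝ) 1, ∀ x : ℝ, |x| ≤ 1 →
      ∃ r : ℝ, Real.log (1 + (Real.exp x - 1) * t)
          = x * t + (x ^ 2 / 2) * (t * (1 - t)) + (x ^ 3 / 6) * (t * (1 - t)) * r
        ∧ |r| ≤ C := by
  refine ⟨720, fun t ht x hx => ?_⟩
  set a : ℝ := Real.exp x - 1 with ha
  have hx1 : (-1:ℝ) ≤ x := (abs_le.1 hx).1
  have hx2 : x ≤ 1 := (abs_le.1 hx).2
  have hpos : ∀ s ∈ Set.Icc (0:ℝ) 1, Real.exp (-1) ≤ 1 + a * s := by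
    intro s hs
    obtain ⟨hs0, hs1⟩ := hs
    have he1 : Real.exp (-1) ≤ 1 := Real.exp_le_one_iff.2 (by norm_num)
    rcases le_or_gt 0 a with h | h
    · nlinarith
    · have : Real.exp (-1) ≤ Real.exp x := Real.exp_le_exp.2 hx1
      have : Real.exp (-1) ≤ 1 + a := by rw [ha]; linarith
      nlinarith
  have hpos' : ∀ s ∈ Set.Icc (0:ℝ) 1, 0 < 1 + a * s :=
    fun s hs => lt_of_lt_of_le (Real.exp_pos _) (hpos s hs)
  set G : ℝ → ℝ := fun s => Real.log (1 + a*s) - x*s - x^2/2*(s*(1-s)) with hGdef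
  set G' : ℝ → ℝ := fun s => a/(1+a*s) - x - x^2/2*(1-2*s) with hG'def
  set G'' : ℝ → ℝ := fun s => x^2 - a^2/(1+a*s)^2 with hG''def
  have hder1 : ∀ s : ℝ, HasDerivAt (fun s : ℝ => 1 + a*s) a s := by
    intro s
    simpa using ((hasDerivAt_id s).const_mul a).const_add 1
  have hG : ∀ s ∈ Set.Icc (0:ℝ) 1, HasDerivAt G (G' s) s := by
    intro s hs
    have hne : 1 + a*s ≠ 0 := ne_of_gt (hpos' s hs)
    have hlog : HasDerivAt (fun s => Real.log (1 + a*s)) ((1+a*s)⁻¹ * a) s := by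
      have := (Real.hasDerivAt_log hne).comp s (hder1 s); exact this
    have hq : HasDerivAt (fun s : ℝ => s*(1-s)) (1-2*s) s := by
      have h := (hasDerivAt_id s).mul ((hasDerivAt_id s).const_sub 1)
      simp only [id_eq] at h
      refine h.congr_deriv ?_; ring
    have := (hlog.sub ((hasDerivAt_id s).const_mul x)).sub (hq.const_mul (x^2/2))
    refine this.congr_deriv ?_
    simp only [hG'def]
    field_simp
    try ring
  have hG' : ∀ s ∈ Set.Icc (0:ℝ) 1, HasDerivAt G' (G'' s) s := by
    intro s hs
    have hne : 1 + a*s ≠ 0 := ne_of_gt (hpos' s hs)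
    have hinv : HasDerivAt (fun s : ℝ => (1+a*s)⁻¹) (-a/(1+a*s)^2) s := by
      have := (hder1 s).inv hne; exact this
    have hfrac : HasDerivAt (fun s : ℝ => a/(1+a*s)) (a * (-a/(1+a*s)^2)) s := by
      simpa [div_eq_mul_inv] using hinv.const_mul a
    have hlin : HasDerivAt (fun s : ℝ => x^2/2*(1-2*s)) (-(x^2)) s := by
      have h2 : HasDerivAt (fun s : ℝ => 1-2*s) (-2) s := by
        simpa using ((hasDerivAt_id s).const_mul 2).const_sub 1
      have := h2.const_mul (x^2/2)
      refine this.congr_deriv ?_; ring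
    have := (hfrac.sub (hasDerivAt_const s x)).sub hlin
    refine this.congr_deriv ?_
    simp [hG''def]
    field_simp
    ring
  have hG0 : G 0 = 0 := by simp [hGdef]
  have hG1 : G 1 = 0 := by simp [hGdef, ha, Real.log_exp]
  have ha2 : |a| ≤ 2*|x| := Real.abs_exp_sub_one_le hx
  have hax : |a - x| ≤ x^2 := Real.abs_exp_sub_one_sub_id_le hx
  have hMb : ∀ s ∈ Set.Icc (0:ℝ) 1, |G'' s| ≤ 240*|x|^3 := by
    intro s hs
    obtain ⟨hs0, hs1⟩ := hs
    have hP := hpos s ⟨hs0, hs1⟩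
    have hP' := hpos' s ⟨hs0, hs1⟩
    have hxa : |x| = |x| := rfl
    have habs : |a*s| ≤ 2*|x| := by
      rw [abs_mul]
      have : |s| ≤ 1 := abs_le.2 ⟨by linarith, hs1⟩
      nlinarith [abs_nonneg a, abs_nonneg x]
    have hxle : |x| ≤ 1 := hx
    -- key decomposition
    have hne : (1+a*s) ≠ 0 := ne_of_gt hP'
    have hdecomp : G'' s = (x^2 - a^2) + (a^2*((1+a*s)^2-1))/(1+a*s)^2 := by
      simp only [hG''def]
      field_simp
      ring
    have h1b : |x^2 - a^2| ≤ 3*|x|^3 := by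
      have : x^2 - a^2 = -((a-x)*(a+x)) := by ring
      rw [this, abs_neg, abs_mul]
      have hsum : |a + x| ≤ 3*|x| := by
        calc |a + x| ≤ |a| + |x| := abs_add_le _ _
        _ ≤ 3*|x| := by linarith
      have h3 : |x|^3 = x^2 * |x| := by
        rw [← sq_abs]; ring
      nlinarith [abs_nonneg (a-x), abs_nonneg (a+x), abs_nonneg x, sq_nonneg x]
    have h2b : |(a^2*((1+a*s)^2-1))/(1+a*s)^2| ≤ 237*|x|^3 := by
      rw [abs_div, abs_mul]
      have hsq : |(1+a*s)^2| = (1+a*s)^2 := abs_of_pos (by positivity)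
      rw [hsq]
      have hnum1 : |a^2| = a^2 := abs_of_nonneg (sq_nonneg a)
      rw [hnum1]
      have ha2' : a^2 ≤ 4*x^2 := by nlinarith [sq_abs a, sq_abs x, abs_nonneg a, abs_nonneg x]
      have hfac : |(1+a*s)^2 - 1| ≤ 8*|x| := by
        have : (1+a*s)^2 - 1 = (a*s)*(2 + a*s) := by ring
        rw [this, abs_mul]
        have h2as : |2 + a*s| ≤ 4 := by
          have := abs_add_le (2:ℝ) (a*s)
          have h2 : |(2:ℝ)| = 2 := by norm_num
          nlinarith [abs_nonneg (a*s)]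
        nlinarith [abs_nonneg (a*s), abs_nonneg x]
      -- (1+a*s)^2 ≥ exp(-1)^2 and exp(-1)^2 * exp(1)^2 = 1
      have hexp : Real.exp (-1) * Real.exp 1 = 1 := by
        rw [← Real.exp_add]; norm_num
      have hepos : (0:ℝ) < Real.exp (-1) := Real.exp_pos _
      have he1 : Real.exp 1 < 2.7182818286 := Real.exp_one_lt_d9
      have he1p : (0:ℝ) < Real.exp 1 := Real.exp_pos _
      have hsq' : Real.exp (-1)^2 ≤ (1+a*s)^2 := by nlinarith
      rw [div_le_iff₀ (by positivity)]
      have hx3 : |x|^3 = x^2*|x| := by rw [← sq_abs]; ring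
      -- a^2 * |(1+a*s)^2-1| ≤ 4x^2 * 8|x| = 32 |x|^3, and 237 * (1+a*s)^2 ≥ 237*exp(-2) ≥ 32
      have hstep : a^2 * |(1+a*s)^2 - 1| ≤ 32*|x|^3 := by
        rw [hx3]
        nlinarith [sq_nonneg a, abs_nonneg ((1+a*s)^2-1), sq_nonneg x, abs_nonneg x]
      have hlow : (32:ℝ) ≤ 237 * (1+a*s)^2 := by
        have : Real.exp (-1)^2 * Real.exp 1^2 = 1 := by nlinarith
        nlinarith
      have hx3nn : 0 ≤ |x|^3 := by positivity
      nlinarith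
    calc |G'' s| ≤ |x^2-a^2| + |(a^2*((1+a*s)^2-1))/(1+a*s)^2| := by
          rw [hdecomp]; exact abs_add_le _ _
      _ ≤ 240*|x|^3 := by linarith
  have hGbound := aux_bound hG hG' hMb hG0 hG1 t ht
  -- now assemble
  set d : ℝ := x^3/6*(t*(1-t)) with hddef
  by_cases hd : d = 0
  · -- then x = 0 or t = 0 or t = 1
    refine ⟨0, ?_, by norm_num⟩
    have : x = 0 ∨ t = 0 ∨ t = 1 := by
      rcases mul_eq_zero.1 hd with h | h
      · left; have : x^3 = 0 := by linarith
        exact pow_eq_zero_iff (by norm_num) |>.1 this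
      · rcases mul_eq_zero.1 h with h' | h'
        · right; left; exact h'
        · right; right; linarith
    rcases this with h | h | h
    · have ha0 : a = 0 := by rw [ha, h, Real.exp_zero]; ring
      simp [ha0, h]
    · simp [h]
    · simp [h, ha, Real.log_exp]
  · refine ⟨G t / d, ?_, ?_⟩
    · have hcan : d * (G t / d) = G t := mul_div_cancel₀ _ hd
      simp only [hGdef] at hcan
      simp only [hddef] at hcan ⊢
      nlinarith [hcan]
    · rw [abs_div, div_le_iff₀ (abs_pos.2 hd)]
      have htnn : 0 ≤ t*(1-t) := by
        obtain ⟨h0, h1⟩ := ht; nlinarith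
      have hdabs : |d| = |x|^3/6*(t*(1-t)) := by
        rw [hddef, abs_mul, abs_of_nonneg htnn, abs_div, abs_pow]
        norm_num
      rw [hdabs]
      simp only [hGdef] at hGbound
      nlinarith [hGbound]
end
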